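/- A compact Hausdorff space X has the NTIP if ker(X) has the NTIP (X assumed non-scattered). -/

import Mathlib

open Classical Set

set_option linter.unusedSectionVars false
set_option maxHeartbeats 1000000
set_option synthInstance.maxHeartbeats 400000
open Classical Set Metric

section Banach

variable {X : Type*} [TopologicalSpace X] [CompactSpace X] [Nonempty X]
variable {A : Subalgebra ℂ C(X, ℂ)} (hA : IsClosed (A : Set C(X, ℂ)))
variable (f : C(X, ℂ)) (hf : f ∈ A)

/-- If `lam • 1 - f` is invertible in `A`, then `lam` avoids the range of `f` and the
inverse is the pointwise resolvent. -/
lemma resolvent_apply {lam : ℂ} (h : IsUnit (lam • (1 : ↥A) - ⟨f, hf⟩)) :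
    lam ∉ Set.range ⇑f ∧
      ∀ x, ((Ring.inverse (lam • (1 : ↥A) - ⟨f, hf⟩) : ↥A) : C(X, ℂ)) x = (lam - f x)⁻¹ := by
  have hmul := Ring.mul_inverse_cancel _ h
  -- push to C(X, ℂ)
  have hval : ((lam • (1 : C(X, ℂ)) - f) * ((Ring.inverse (lam • (1 : ↥A) - ⟨f, hf⟩) : ↥A) : C(X, ℂ))) = 1 := by
    have := congrArg (Subtype.val) hmul
    simpa using this
  constructor
  · rintro ⟨x, hx⟩
    have := congrArg (fun g : C(X, ℂ) => g x) hval
    simp [hx] at this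
  · intro x
    have := congrArg (fun g : C(X, ℂ) => g x) hval
    simp only [ContinuousMap.mul_apply, ContinuousMap.sub_apply, ContinuousMap.smul_apply,
      ContinuousMap.one_apply, smul_eq_mul, mul_one, ContinuousMap.one_apply] at this
    exact eq_inv_of_mul_eq_one_left (by rw [mul_comm] at this; exact this)

end Banach

section Banach2

variable {X : Type*} [TopologicalSpace X] [CompactSpace X] [Nonempty X]
variable {A : Subalgebra ℂ C(X, ℂ)}
variable (f : C(X, ℂ)) (hf : f ∈ A)

lemma resolvent_norm_le {lam : ℂ} (h : IsUnit (lam • (1 : ↥A) - ⟨f, hf⟩)) :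
    ‖(Ring.inverse (lam • (1 : ↥A) - ⟨f, hf⟩) : ↥A)‖ ≤ (infDist lam (Set.range ⇑f))⁻¹ := by
  obtain ⟨hnotmem, hptwise⟩ := resolvent_apply f hf h
  have hTne : (Set.range ⇑f).Nonempty := Set.range_nonempty _
  have hTcl : IsClosed (Set.range ⇑f) := (isCompact_range f.continuous).isClosed
  have hdpos : 0 < infDist lam (Set.range ⇑f) := (hTcl.notMem_iff_infDist_pos hTne).mp hnotmem
  have : ‖((Ring.inverse (lam • (1 : ↥A) - ⟨f, hf⟩) : ↥A) : C(X, ℂ))‖ ≤ (infDist lam (Set.range ⇑f))⁻¹ := by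
    rw [ContinuousMap.norm_le _ (by positivity)]
    intro x
    rw [hptwise x]
    have h1 : infDist lam (Set.range ⇑f) ≤ ‖lam - f x‖ := by
      simpa [Complex.dist_eq] using infDist_le_dist_of_mem (x := lam) (Set.mem_range_self (f := ⇑f) x)
    rw [norm_inv]
    exact inv_anti₀ hdpos h1
  exact this

lemma good_perturb (hA : IsClosed (A : Set C(X, ℂ))) {mu lam : ℂ} (hmu : IsUnit (mu • (1 : ↥A) - ⟨f, hf⟩))
    (hd : dist lam mu < infDist mu (Set.range ⇑f)) :
    IsUnit (lam • (1 : ↥A) - ⟨f, hf⟩) := by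
  haveI : CompleteSpace ↥A := hA.completeSpace_coe
  set a : ↥A := ⟨f, hf⟩
  obtain ⟨hnotmem, _⟩ := resolvent_apply f hf hmu
  have hTne : (Set.range ⇑f).Nonempty := Set.range_nonempty _
  have hTcl : IsClosed (Set.range ⇑f) := (isCompact_range f.continuous).isClosed
  have hdpos : 0 < infDist mu (Set.range ⇑f) := (hTcl.notMem_iff_infDist_pos hTne).mp hnotmem
  set u := hmu.unit
  have hinvnorm : ‖((u⁻¹ : (↥A)ˣ) : ↥A)‖ ≤ (infDist mu (Set.range ⇑f))⁻¹ := by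
    have : ((u⁻¹ : (↥A)ˣ) : ↥A) = Ring.inverse (mu • (1 : ↥A) - a) := by
      rw [← hmu.unit_spec, Ring.inverse_unit]
    rw [this]
    exact resolvent_norm_le f hf hmu
  have hinvpos : 0 < ‖((u⁻¹ : (↥A)ˣ) : ↥A)‖ := Units.norm_pos u⁻¹
  have hlt : ‖(lam - mu) • (1 : ↥A)‖ < ‖((u⁻¹ : (↥A)ˣ) : ↥A)‖⁻¹ := by
    have h1 : ‖(lam - mu) • (1 : ↥A)‖ = ‖lam - mu‖ := by
      rw [norm_smul]
      have : ‖(1 : ↥A)‖ = 1 := by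
        show ‖((1 : ↥A) : C(X, ℂ))‖ = 1
        simp [norm_one]
      rw [this, mul_one]
    have h2 : (infDist mu (Set.range ⇑f)) ≤ ‖((u⁻¹ : (↥A)ˣ) : ↥A)‖⁻¹ := by
      rw [← inv_inv (infDist mu (Set.range ⇑f))]
      exact inv_anti₀ hinvpos hinvnorm
    rw [h1]
    calc ‖lam - mu‖ = dist lam mu := (Complex.dist_eq _ _).symm
      _ < infDist mu (Set.range ⇑f) := hd
      _ ≤ _ := h2
  have hunit := (u.add ((lam - mu) • (1 : ↥A)) hlt).isUnit
  rw [u.val_add _ hlt] at hunit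
  have heq : (u : ↥A) + (lam - mu) • (1 : ↥A) = lam • (1 : ↥A) - a := by
    rw [hmu.unit_spec]
    rw [sub_smul]
    abel
  rwa [heq] at hunit

end Banach2

section Banach3

variable {X : Type*} [TopologicalSpace X] [CompactSpace X] [Nonempty X]
variable {A : Subalgebra ℂ C(X, ℂ)}
variable (f : C(X, ℂ)) (hf : f ∈ A)

lemma good_far (hA : IsClosed (A : Set C(X, ℂ))) {lam : ℂ} (h : ‖f‖ < ‖lam‖) :
    IsUnit (lam • (1 : ↥A) - ⟨f, hf⟩) := by
  haveI : CompleteSpace ↥A := hA.completeSpace_coe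
  set a : ↥A := ⟨f, hf⟩
  have hlam : lam ≠ 0 := by
    intro h0
    rw [h0] at h
    simp at h
    exact (norm_nonneg f).not_gt h
  have hnorma : ‖a‖ = ‖f‖ := rfl
  have hsmall : ‖lam⁻¹ • a‖ < 1 := by
    rw [norm_smul, norm_inv]
    rw [inv_mul_lt_iff₀ (norm_pos_iff.mpr hlam), mul_one, hnorma]
    exact h
  have hu1 : IsUnit ((1 : ↥A) - lam⁻¹ • a) := (Units.oneSub _ hsmall).isUnit
  have key : ∀ x y : ↥A, x * y = 1 → (lam • x) * (lam⁻¹ • y) = 1 := by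
    intro x y hxy
    rw [smul_mul_assoc, mul_smul_comm, smul_smul, mul_inv_cancel₀ hlam, one_smul, hxy]
  have key' : ∀ x y : ↥A, x * y = 1 → (lam⁻¹ • x) * (lam • y) = 1 := by
    intro x y hxy
    rw [smul_mul_assoc, mul_smul_comm, smul_smul, inv_mul_cancel₀ hlam, one_smul, hxy]
  set u := hu1.unit
  have hu2 : IsUnit (lam • ((1 : ↥A) - lam⁻¹ • a)) := by
    refine ⟨⟨lam • ((u : ↥A)), lam⁻¹ • ((u⁻¹ : (↥A)ˣ) : ↥A), ?_, ?_⟩, ?_⟩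
    · exact key _ _ u.mul_inv
    · exact key' _ _ u.inv_mul
    · show lam • (u : ↥A) = _
      congr 1
  have heq : lam • ((1 : ↥A) - lam⁻¹ • a) = lam • (1 : ↥A) - a := by
    rw [smul_sub, smul_smul, mul_inv_cancel₀ hlam, one_smul]
  rwa [heq] at hu2

lemma good_on_path (hA : IsClosed (A : Set C(X, ℂ))) (p : ℝ → ℂ) (hp : Continuous p)
    {s t : ℝ} (hst : s ≤ t) (hpT : ∀ u ∈ Icc s t, p u ∉ Set.range ⇑f)
    (hgood : ∃ u₀ ∈ Icc s t, IsUnit (p u₀ • (1 : ↥A) - ⟨f, hf⟩)) :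
    ∀ u ∈ Icc s t, IsUnit (p u • (1 : ↥A) - ⟨f, hf⟩) := by
  haveI : CompleteSpace ↥A := hA.completeSpace_coe
  set T := Set.range ⇑f with hT
  have hTne : T.Nonempty := Set.range_nonempty _
  have hTcl : IsClosed T := (isCompact_range f.continuous).isClosed
  set G : Set ℂ := {lam | IsUnit (lam • (1 : ↥A) - ⟨f, hf⟩)} with hG
  have hGopen : IsOpen G := by
    have hcont : Continuous fun lam : ℂ => lam • (1 : ↥A) - (⟨f, hf⟩ : ↥A) :=
      (continuous_id.smul continuous_const).sub continuous_const
    exact Units.isOpen.preimage hcont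
  set W : Set ℂ := {lam | lam ∉ T ∧ ¬ IsUnit (lam • (1 : ↥A) - ⟨f, hf⟩)} with hW
  have hWopen : IsOpen W := by
    rw [Metric.isOpen_iff]
    rintro lam ⟨hlamT, hlamU⟩
    have hdpos : 0 < infDist lam T := (hTcl.notMem_iff_infDist_pos hTne).mp hlamT
    refine ⟨infDist lam T / 2, by positivity, ?_⟩
    intro mu hmu
    rw [mem_ball] at hmu
    have hmuT : mu ∉ T := by
      intro hmem
      have := infDist_le_dist_of_mem (x := lam) hmem
      rw [dist_comm] at hmu
      linarith
    have hmud : infDist lam T ≤ infDist mu T + dist lam mu := infDist_le_infDist_add_dist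
    refine ⟨hmuT, ?_⟩
    intro hmuU
    apply hlamU
    apply good_perturb f hf hA hmuU
    rw [dist_comm] at hmu
    linarith
  intro u hu
  by_contra hbad
  obtain ⟨u₀, hu₀, hu₀good⟩ := hgood
  have hcover : Icc s t ⊆ p ⁻¹' G ∪ p ⁻¹' W := by
    intro v hv
    by_cases hU : IsUnit (p v • (1 : ↥A) - (⟨f, hf⟩ : ↥A))
    · exact Or.inl hU
    · exact Or.inr ⟨hpT v hv, hU⟩
  have h1 : (Icc s t ∩ p ⁻¹' G).Nonempty := ⟨u₀, hu₀, hu₀good⟩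
  have h2 : (Icc s t ∩ p ⁻¹' W).Nonempty := ⟨u, hu, hpT u hu, hbad⟩
  obtain ⟨v, _, hvG, hvW⟩ := isPreconnected_Icc _ _ (hGopen.preimage hp) (hWopen.preimage hp)
    hcover h1 h2
  exact hvW.2 hvG

end Banach3

section Banach4

open MeasureTheory intervalIntegral

variable {X : Type*} [TopologicalSpace X] [CompactSpace X] [Nonempty X]
variable {A : Subalgebra ℂ C(X, ℂ)}

lemma exists_contour_elt (hA : IsClosed (A : Set C(X, ℂ))) (f : C(X, ℂ)) (hf : f ∈ A) {r : ℝ}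
    (hgood : ∀ θ ∈ Icc (0:ℝ) (2*Real.pi),
      IsUnit ((circleMap 1 r θ) • (1 : ↥A) - ⟨f, hf⟩)) :
    ∃ e ∈ A, ∀ x, e x = ∮ z in C(1, r), (z - f x)⁻¹ := by
  haveI : CompleteSpace ↥A := hA.completeSpace_coe
  set a : ↥A := ⟨f, hf⟩ with ha
  set F : ℝ → ↥A := fun θ =>
    (circleMap 0 r θ * Complex.I) • Ring.inverse ((circleMap 1 r θ) • (1 : ↥A) - a) with hF
  have hgcont : Continuous fun θ : ℝ => (circleMap 1 r θ) • (1 : ↥A) - a :=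
    ((continuous_circleMap 1 r).smul continuous_const).sub continuous_const
  have hFcont : ContinuousOn F (Icc (0:ℝ) (2*Real.pi)) := by
    intro θ hθ
    apply ContinuousAt.continuousWithinAt
    have hu := hgood θ hθ
    have hinv : ContinuousAt Ring.inverse ((circleMap 1 r θ) • (1 : ↥A) - a) := by
      have := NormedRing.inverse_continuousAt hu.unit
      rwa [hu.unit_spec] at this
    have hinv2 : ContinuousAt (fun θ' : ℝ => Ring.inverse ((circleMap 1 r θ') • (1 : ↥A) - a)) θ :=
      ContinuousAt.comp (f := fun θ' : ℝ => (circleMap 1 r θ') • (1 : ↥A) - a)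
        (g := Ring.inverse) hinv hgcont.continuousAt
    exact (((continuous_circleMap 0 r).mul continuous_const).continuousAt).smul hinv2
  have hInt : IntervalIntegrable F volume 0 (2*Real.pi) := by
    apply ContinuousOn.intervalIntegrable
    rwa [uIcc_of_le (by positivity)]
  set E : ↥A := ∫ θ in (0:ℝ)..(2*Real.pi), F θ with hE
  refine ⟨(E : C(X, ℂ)), E.2, ?_⟩
  intro x
  -- the inclusion as a continuous linear map
  let ι : ↥A →L[ℂ] C(X, ℂ) :=
    { toFun := Subtype.val, map_add' := fun _ _ => rfl, map_smul' := fun _ _ => rfl,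
      cont := continuous_subtype_val }
  let Φ : ↥A →L[ℂ] ℂ := (ContinuousMap.evalCLM ℂ x).comp ι
  have hcomm : (∫ θ in (0:ℝ)..(2*Real.pi), Φ (F θ)) = Φ E :=
    Φ.intervalIntegral_comp_comm hInt
  have hΦE : Φ E = (E : C(X, ℂ)) x := rfl
  have hptwise : ∀ θ ∈ uIcc (0:ℝ) (2*Real.pi),
      Φ (F θ) = deriv (circleMap 1 r) θ • (circleMap 1 r θ - f x)⁻¹ := by
    intro θ hθ
    rw [uIcc_of_le (by positivity)] at hθ
    have hu := hgood θ hθ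
    have hres := (resolvent_apply f hf hu).2 x
    rw [deriv_circleMap, smul_eq_mul]
    show (circleMap 0 r θ * Complex.I) • (Φ (Ring.inverse ((circleMap 1 r θ) • (1 : ↥A) - a))) = _
    rw [smul_eq_mul]
    congr 1
  rw [← hΦE, ← hcomm, circleIntegral]
  exact integral_congr hptwise
end Banach4


/-- `χ_H ∈ A`. -/
noncomputable def chiMem {X : Type*} [TopologicalSpace X]
    (A : Subalgebra ℂ C(X, ℂ)) (H : Set X) : Prop :=
  ∃ g ∈ A, ∀ x, g x = if x ∈ H then (1 : ℂ) else 0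

/-- `X` has the non-trivial idempotent property: every closed subalgebra of `C(X, ℂ)`
separating points (and containing constants) contains a non-trivial idempotent `χ_H`,
for some clopen `H` with `∅ ⊊ H ⊊ X`. -/
noncomputable def NTIP (X : Type*) [TopologicalSpace X] : Prop :=
  ∀ A : Subalgebra ℂ C(X, ℂ), IsClosed (A : Set C(X, ℂ)) → A.SeparatesPoints →
    ∃ H : Set X, IsClopen H ∧ H.Nonempty ∧ H ≠ Set.univ ∧ chiMem A H



section Aux

variable {X : Type*} [TopologicalSpace X] [CompactSpace X] [T2Space X]

/-- Every nonempty subset of the complement of the perfect kernel has an isolated point. -/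
lemma exists_isolated {K : Set X} (hKmax : ∀ P : Set X, Perfect P → P ⊆ K)
    {Q : Set X} (hQK : ∀ q ∈ Q, q ∉ K) (hne : Q.Nonempty) :
    ∃ q ∈ Q, ∃ U, IsOpen U ∧ U ∩ Q = {q} := by
  by_contra hcon
  push_neg at hcon
  have hpre : Preperfect Q := by
    intro q hq
    rw [accPt_iff_nhds]
    intro U hU
    rcases mem_nhds_iff.mp hU with ⟨V, hVU, hVopen, hqV⟩
    have hne' := hcon q hq V hVopen
    by_contra hy
    push_neg at hy
    apply hne'
    apply Subset.antisymm
    · intro y hyV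
      rw [Set.mem_singleton_iff]
      exact hy y ⟨hVU hyV.1, hyV.2⟩
    · intro y hy'
      rcases hy' with rfl
      exact ⟨hqV, hq⟩
  have hperf : Perfect (closure Q) := preperfect_iff_perfect_closure.mp hpre
  rcases hne with ⟨q, hq⟩
  exact hQK q hq (hKmax _ hperf (subset_closure hq))

/-- A compact subset of ℂ inside the range of `f`, avoiding the image of `K`, is countable. -/
lemma countable_of_avoids_kernel {K : Set X} (hKmax : ∀ P : Set X, Perfect P → P ⊆ K)
    (f : C(X, ℂ)) (D : Set ℂ) (hDcl : IsClosed D) (hDr : D ⊆ Set.range f)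
    (hdisj : ∀ x ∈ K, f x ∉ D) : D.Countable := by
  by_contra hunc
  obtain ⟨V, P, hVct, hPperf, hVP⟩ := exists_countable_union_perfect_of_isClosed hDcl
  have hPne : P.Nonempty := by
    rcases P.eq_empty_or_nonempty with h | h
    · exact absurd (by rw [hVP, h, union_empty]; exact hVct) hunc
    · exact h
  have hPD : P ⊆ D := by rw [hVP]; exact subset_union_right
  set S : Set (Set X) := {Q | IsClosed Q ∧ Q ⊆ ⇑f ⁻¹' P ∧ P ⊆ ⇑f '' Q} with hS
  have hzorn : ∀ c ⊆ S, IsChain (· ⊆ ·) c → c.Nonempty → ∃ lb ∈ S, ∀ s ∈ c, lb ⊆ s := by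
    intro c hcS hchain hcne
    refine ⟨⋂₀ c, ⟨isClosed_sInter fun Q hQ => (hcS hQ).1, ?_, ?_⟩,
      fun s hs => sInter_subset_of_mem hs⟩
    · rcases hcne with ⟨Q, hQ⟩
      exact (sInter_subset_of_mem hQ).trans (hcS hQ).2.1
    · intro p hp
      have hnei : (⋂ Q : c, ((Q : Set X) ∩ ⇑f ⁻¹' {p})).Nonempty := by
        haveI : Nonempty c := hcne.to_subtype
        apply IsCompact.nonempty_iInter_of_directed_nonempty_isCompact_isClosed
        · intro Q R
          rcases hchain.total Q.2 R.2 with h | h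
          · exact ⟨Q, Subset.rfl, inter_subset_inter_left _ h⟩
          · exact ⟨R, inter_subset_inter_left _ h, Subset.rfl⟩
        · intro Q
          rcases (hcS Q.2).2.2 hp with ⟨x, hxQ, hfx⟩
          exact ⟨x, hxQ, by simpa using hfx⟩
        · intro Q
          exact ((hcS Q.2).1.inter (isClosed_singleton.preimage f.continuous)).isCompact
        · intro Q
          exact (hcS Q.2).1.inter (isClosed_singleton.preimage f.continuous)
      rcases hnei with ⟨x, hx⟩
      simp only [mem_iInter, mem_inter_iff, mem_preimage, mem_singleton_iff] at hx
      refine ⟨x, ?_, (hx ⟨_, hcne.choose_spec⟩).2⟩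
      rw [mem_sInter]
      intro Q hQ
      exact (hx ⟨Q, hQ⟩).1
  have htop : ⇑f ⁻¹' P ∈ S := by
    refine ⟨(hPperf.closed).preimage f.continuous, Subset.rfl, ?_⟩
    intro p hp
    rcases hDr (hPD hp) with ⟨x, hx⟩
    exact ⟨x, by simp [mem_preimage, hx, hp], hx⟩
  obtain ⟨M, hMsub, hMmin⟩ := zorn_superset_nonempty S hzorn _ htop
  have hMS : M ∈ S := hMmin.prop
  have hMK : ∀ q ∈ M, q ∉ K := fun q hq hqK => hdisj q hqK (hPD (hMS.2.1 hq))
  have hMne : M.Nonempty := by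
    rcases hPne with ⟨p, hp⟩
    rcases hMS.2.2 hp with ⟨x, hx, _⟩
    exact ⟨x, hx⟩
  obtain ⟨q, hqM, U, hUopen, hUQ⟩ := exists_isolated hKmax hMK hMne
  set M' : Set X := M \ U with hM'
  have hM'cl : IsClosed M' := hMS.1.sdiff hUopen
  have hqU : q ∈ U := by
    have : q ∈ U ∩ M := by rw [hUQ]; exact rfl
    exact this.1
  have hnotall : ¬ P ⊆ ⇑f '' M' := by
    intro hPM'
    have hM'S : M' ∈ S := ⟨hM'cl, (diff_subset).trans hMS.2.1, hPM'⟩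
    have hMM' : M ⊆ M' := hMmin.2 hM'S diff_subset
    exact (hMM' hqM).2 hqU
  -- the only preimages in M of points outside f '' M' is q
  have honly : ∀ y ∈ P, y ∉ ⇑f '' M' → y = f q := by
    intro y hy hyM'
    rcases hMS.2.2 hy with ⟨x, hxM, hfx⟩
    have hxM' : x ∉ M' := fun h => hyM' ⟨x, h, hfx⟩
    have hxU : x ∈ U := by
      by_contra h
      exact hxM' ⟨hxM, h⟩
    have : x ∈ U ∩ M := ⟨hxU, hxM⟩
    rw [hUQ] at this
    rw [← hfx, this]
  obtain ⟨p₀, hp₀P, hp₀⟩ := not_subset.mp hnotall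
  -- p₀ is isolated in P: contradiction with perfectness
  have hW : (⇑f '' M')ᶜ ∈ nhds p₀ := by
    refine IsOpen.mem_nhds ?_ hp₀
    have : IsCompact (⇑f '' M') := (hM'cl.isCompact).image f.continuous
    exact this.isClosed.isOpen_compl
  have hacc := hPperf.acc p₀ hp₀P
  rw [accPt_iff_nhds] at hacc
  rcases hacc _ hW with ⟨y, ⟨hyW, hyP⟩, hyne⟩
  have h1 : y = f q := honly y hyP hyW
  have h2 : p₀ = f q := honly p₀ hp₀P hp₀
  exact hyne (by rw [h1, h2])

end Aux

section Main

open Complex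

/-- If `X` is compact Hausdorff and non-scattered with perfect kernel `K = ker X`
(the largest perfect subset, nonempty), and `K` has the NTIP, then `X` has the NTIP. -/
theorem stmt11 {X : Type*} [TopologicalSpace X] [CompactSpace X] [T2Space X]
    (K : Set X) (hKperf : Perfect K) (hKne : K.Nonempty)
    (hKmax : ∀ P : Set X, Perfect P → P ⊆ K)
    (hK : NTIP K) : NTIP X := by
  intro A hAcl hAsep
  haveI : Nonempty X := ⟨hKne.choose⟩
  have hKcl : IsClosed K := hKperf.closed
  haveI : CompactSpace ↥K := isCompact_iff_compactSpace.mp hKcl.isCompact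
  set ρ : C(↥K, X) := ⟨Subtype.val, continuous_subtype_val⟩ with hρ
  set B₀ : Subalgebra ℂ C(↥K, ℂ) := A.map (ContinuousMap.compRightAlgHom ℂ ℂ ρ) with hB₀
  set B := B₀.topologicalClosure with hB
  have hBcl : IsClosed (B : Set C(↥K, ℂ)) := B₀.isClosed_topologicalClosure
  have hBsep : B.SeparatesPoints := by
    apply Subalgebra.separatesPoints_monotone B₀.le_topologicalClosure
    intro x y hxy
    have hvxy : (x : X) ≠ (y : X) := fun h => hxy (Subtype.ext h)
    obtain ⟨fc, ⟨g, hgA, rfl⟩, hgxy⟩ := hAsep hvxy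
    exact ⟨_, ⟨ContinuousMap.compRightAlgHom ℂ ℂ ρ g,
      Subalgebra.mem_map.mpr ⟨g, hgA, rfl⟩, rfl⟩, hgxy⟩
  obtain ⟨H', hH'clopen, hH'ne, hH'prop, g, hgB, hgval⟩ := hK B hBcl hBsep
  -- approximate χ_{H'} within 1/8 by the restriction of some f ∈ A
  have hgcl : (g : C(↥K, ℂ)) ∈ closure (B₀ : Set C(↥K, ℂ)) := by
    rw [← Subalgebra.topologicalClosure_coe]
    exact hgB
  obtain ⟨b, hbB₀, hdistgb⟩ := Metric.mem_closure_iff.mp hgcl (8:ℝ)⁻¹ (by norm_num)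
  obtain ⟨f, hfA, rfl⟩ := Subalgebra.mem_map.mp hbB₀
  have happrox : ∀ k : ↥K, dist (f (k : X)) (g k) < (8:ℝ)⁻¹ := by
    intro k
    calc dist (f (k : X)) (g k)
        = dist ((ContinuousMap.compRightAlgHom ℂ ℂ ρ f) k) (g k) := rfl
      _ ≤ dist (ContinuousMap.compRightAlgHom ℂ ℂ ρ f) g := ContinuousMap.dist_apply_le_dist k
      _ < (8:ℝ)⁻¹ := by rw [dist_comm] at hdistgb; exact hdistgb
  -- the bad countable set
  set T : Set ℂ := Set.range ⇑f with hT
  have hTcpt : IsCompact T := isCompact_range f.continuous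
  set D : Set ℂ := T \ (Metric.ball (0:ℂ) (8:ℝ)⁻¹ ∪ Metric.ball (1:ℂ) (8:ℝ)⁻¹) with hD
  have hKball : ∀ x ∈ K, f x ∈ Metric.ball (0:ℂ) (8:ℝ)⁻¹ ∪ Metric.ball (1:ℂ) (8:ℝ)⁻¹ := by
    intro x hx
    have h := happrox ⟨x, hx⟩
    rw [hgval ⟨x, hx⟩] at h
    by_cases hmem : (⟨x, hx⟩ : ↥K) ∈ H'
    · rw [if_pos hmem] at h
      exact Or.inr (Metric.mem_ball.mpr h)
    · rw [if_neg hmem] at h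
      exact Or.inl (Metric.mem_ball.mpr h)
  have hDct : D.Countable := by
    apply countable_of_avoids_kernel hKmax f
    · exact hTcpt.isClosed.sdiff (Metric.isOpen_ball.union Metric.isOpen_ball)
    · exact diff_subset
    · intro x hx hxD
      exact hxD.2 (hKball x hx)
  -- choose a good radius r
  have hpick : ∀ (s : Set ℝ), s.Countable → ∀ a b : ℝ, a < b → ∃ u, u ∈ Ioo a b ∧ u ∉ s := by
    intro s hs a b hab
    by_contra hcon
    push_neg at hcon
    have hsub : Ioo a b ⊆ s := fun u hu => hcon u hu
    have h1 : MeasureTheory.volume (Ioo a b) = 0 :=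
      le_antisymm (le_trans (MeasureTheory.measure_mono hsub) (le_of_eq (hs.measure_zero MeasureTheory.volume))) zero_le
    rw [Real.volume_Ioo] at h1
    exact (ENNReal.ofReal_pos.mpr (by linarith)).ne' h1
  obtain ⟨r, hrIoo, hrgood⟩ := hpick ((fun c => dist c 1) '' D) (hDct.image _)
    (8:ℝ)⁻¹ 2⁻¹ (by norm_num)
  obtain ⟨θs, hθsIoo, hθsgood⟩ := hpick ((fun c => Complex.arg (c - 1)) '' D) (hDct.image _)
    (Real.pi/3) (Real.pi/2) (by linarith [Real.pi_pos])
  have hrpos : (0:ℝ) < r := lt_trans (by norm_num) hrIoo.1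
  have hsphere : ∀ x : X, dist (f x) 1 ≠ r := by
    intro x hx
    have hmem : f x ∈ T := Set.mem_range_self x
    have : f x ∈ Metric.ball (0:ℂ) (8:ℝ)⁻¹ ∪ Metric.ball (1:ℂ) (8:ℝ)⁻¹ ∨ f x ∈ D := by
      by_cases hb : f x ∈ Metric.ball (0:ℂ) (8:ℝ)⁻¹ ∪ Metric.ball (1:ℂ) (8:ℝ)⁻¹
      · exact Or.inl hb
      · exact Or.inr ⟨hmem, hb⟩
    rcases this with hb | hd
    · rcases hb with hb0 | hb1
      · rw [Metric.mem_ball] at hb0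
        have h1 : dist (f x) 1 ≥ 1 - (8:ℝ)⁻¹ := by
          have := dist_triangle (0:ℂ) (f x) 1
          have h01 : dist (0:ℂ) 1 = 1 := by simp
          rw [dist_comm (0:ℂ) (f x)] at this
          linarith [this, h01.symm ▸ this]
        rw [hx] at h1
        linarith [hrIoo.2]
      · rw [Metric.mem_ball] at hb1
        rw [hx] at hb1
        linarith [hrIoo.1]
    · exact hrgood ⟨f x, hd, hx⟩
  -- the circle C(1, r) avoids T
  have hcircle : ∀ θ : ℝ, circleMap 1 r θ ∉ T := by
    rintro θ ⟨x, hx⟩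
    apply hsphere x
    rw [hx]
    exact Metric.mem_sphere.mp (circleMap_mem_sphere 1 (le_of_lt hrpos) θ)
  -- the ray 1 + t e^{iθs} avoids T for t ≥ r
  have hcos : 0 ≤ Real.cos θs := by
    apply Real.cos_nonneg_of_mem_Icc
    constructor
    · linarith [hθsIoo.1, Real.pi_pos]
    · linarith [hθsIoo.2]
  have hray : ∀ t : ℝ, r ≤ t → (1 + (t:ℂ) * Complex.exp (θs * Complex.I)) ∉ T := by
    intro t ht hmem
    have htpos : (0:ℝ) < t := lt_of_lt_of_le hrpos ht
    set w : ℂ := (t:ℂ) * Complex.exp (θs * Complex.I) with hw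
    have hwnorm : ‖w‖ = t := by
      rw [hw, norm_mul, Complex.norm_exp_ofReal_mul_I, mul_one, Complex.norm_real,
        Real.norm_eq_abs, abs_of_pos htpos]
    have hsub : (1 + w) - 1 = w := by ring
    have hd1 : dist (1 + w) 1 = t := by
      rw [dist_eq_norm, hsub]
      exact hwnorm
    have hre : (Complex.exp ((θs:ℂ) * Complex.I)).re = Real.cos θs := by
      rw [Complex.exp_mul_I]
      simp [Complex.add_re, Complex.mul_re, Complex.I_re, Complex.I_im,
        Complex.cos_ofReal_re, Complex.sin_ofReal_im]
    have hzre : (1 + w).re = 1 + t * Real.cos θs := by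
      rw [Complex.add_re, Complex.one_re, hw, Complex.re_ofReal_mul, hre]
    have hbig : (1:ℝ) ≤ ‖1 + w‖ := by
      have h1 : (1 + w).re ≤ ‖1 + w‖ := Complex.re_le_norm _
      have h2 : 0 ≤ t * Real.cos θs := mul_nonneg (le_of_lt htpos) hcos
      rw [hzre] at h1
      linarith
    have hmem' : (1 + w) ∈ Metric.ball (0:ℂ) (8:ℝ)⁻¹ ∪ Metric.ball (1:ℂ) (8:ℝ)⁻¹ ∨ (1 + w) ∈ D := by
      by_cases hb : (1 + w) ∈ Metric.ball (0:ℂ) (8:ℝ)⁻¹ ∪ Metric.ball (1:ℂ) (8:ℝ)⁻¹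
      · exact Or.inl hb
      · exact Or.inr ⟨hmem, hb⟩
    rcases hmem' with (hb0 | hb1) | hd
    · rw [Metric.mem_ball, dist_zero_right] at hb0
      linarith
    · rw [Metric.mem_ball, hd1] at hb1
      linarith [hrIoo.1]
    · apply hθsgood
      refine ⟨1 + w, hd, ?_⟩
      show Complex.arg ((1 + w) - 1) = θs
      have heq1 : (1 + w) - 1 = w := by ring
      rw [heq1, hw, Complex.arg_real_mul _ htpos, Complex.exp_mul_I]
      apply Complex.arg_cos_add_sin_mul_I
      constructor
      · linarith [hθsIoo.1, Real.pi_pos]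
      · linarith [hθsIoo.2, Real.pi_pos]
  -- all points of the circle are "good"
  have hgoodall : ∀ θ ∈ Icc (0:ℝ) (2*Real.pi),
      IsUnit ((circleMap 1 r θ) • (1 : ↥A) - ⟨f, hfA⟩) := by
    set R₀ : ℝ := max r (‖f‖ + 2) with hR₀
    set pray : ℝ → ℂ := fun t => 1 + (t:ℂ) * Complex.exp (θs * Complex.I) with hpray
    have hpraycont : Continuous pray :=
      continuous_const.add (Complex.continuous_ofReal.mul continuous_const)
    have hfarnorm : ‖f‖ < ‖pray R₀‖ := by
      have hub : ‖(R₀:ℂ) * Complex.exp (θs * Complex.I)‖ = R₀ := by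
        rw [norm_mul, Complex.norm_exp_ofReal_mul_I, mul_one, Complex.norm_real,
          Real.norm_eq_abs, abs_of_pos (lt_of_lt_of_le hrpos (le_max_left _ _))]
      have h3 : ‖(R₀:ℂ) * Complex.exp (θs * Complex.I)‖
          ≤ ‖pray R₀‖ + ‖(1:ℂ)‖ := by
        have := norm_sub_le (pray R₀) 1
        have heq : pray R₀ - 1 = (R₀:ℂ) * Complex.exp (θs * Complex.I) := by
          rw [hpray]; ring
        rw [heq] at this
        linarith [this]
      rw [hub] at h3
      have h4 : ‖f‖ + 2 ≤ R₀ := le_max_right _ _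
      simp only [norm_one] at h3
      linarith
    have hfar : IsUnit ((pray R₀) • (1 : ↥A) - ⟨f, hfA⟩) := good_far f hfA hAcl hfarnorm
    have hrR₀ : r ≤ R₀ := le_max_left _ _
    have hraygood : ∀ t ∈ Icc r R₀, IsUnit ((pray t) • (1 : ↥A) - ⟨f, hfA⟩) := by
      apply good_on_path f hfA hAcl pray hpraycont hrR₀
      · intro u hu
        exact hray u hu.1
      · exact ⟨R₀, ⟨hrR₀, le_refl _⟩, hfar⟩
    have hstart : IsUnit ((circleMap 1 r θs) • (1 : ↥A) - ⟨f, hfA⟩) := by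
      have : circleMap 1 r θs = pray r := rfl
      rw [this]
      exact hraygood r ⟨le_refl _, hrR₀⟩
    have hcirclegood : ∀ θ ∈ Icc θs (θs + 2*Real.pi),
        IsUnit ((circleMap 1 r θ) • (1 : ↥A) - ⟨f, hfA⟩) := by
      apply good_on_path f hfA hAcl (circleMap 1 r) (continuous_circleMap 1 r)
        (by linarith [Real.pi_pos])
      · intro u _
        exact hcircle u
      · exact ⟨θs, ⟨le_refl _, by linarith [Real.pi_pos]⟩, hstart⟩
    intro θ hθ
    rcases le_or_gt θs θ with h | h
    · exact hcirclegood θ ⟨h, by linarith [hθ.2, hθsIoo.1, Real.pi_pos]⟩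
    · have hper : circleMap 1 r θ = circleMap 1 r (θ + 2*Real.pi) :=
        (periodic_circleMap 1 r θ).symm
      rw [hper]
      apply hcirclegood
      constructor
      · have : θs < Real.pi / 2 := hθsIoo.2
        linarith [hθ.1, Real.pi_pos]
      · linarith [le_of_lt h]
  obtain ⟨e, heA, heval⟩ := exists_contour_elt hAcl f hfA hgoodall
  set H : Set X := ⇑f ⁻¹' (Metric.ball (1:ℂ) r) with hH
  have hHclopen : IsClopen H := by
    constructor
    · have : H = ⇑f ⁻¹' (Metric.closedBall (1:ℂ) r) := by
        ext x
        simp only [hH, Set.mem_preimage, Metric.mem_ball, Metric.mem_closedBall]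
        constructor
        · exact le_of_lt
        · intro h
          rcases lt_or_eq_of_le h with h' | h'
          · exact h'
          · exact absurd h' (hsphere x)
      rw [this]
      exact Metric.isClosed_closedBall.preimage f.continuous
    · exact Metric.isOpen_ball.preimage f.continuous
  have hHne : H.Nonempty := by
    obtain ⟨k₁, hk₁⟩ := hH'ne
    refine ⟨(k₁ : X), ?_⟩
    have h := happrox k₁
    rw [hgval k₁, if_pos hk₁] at h
    simp only [hH, Set.mem_preimage, Metric.mem_ball]
    calc dist (f (k₁:X)) 1 < (8:ℝ)⁻¹ := h
      _ < r := hrIoo.1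
  have hHprop : H ≠ Set.univ := by
    obtain ⟨k₀, hk₀⟩ := (Set.ne_univ_iff_exists_notMem H').mp hH'prop
    intro huniv
    have h := happrox k₀
    rw [hgval k₀, if_neg hk₀] at h
    have hmem : (k₀ : X) ∈ H := huniv ▸ Set.mem_univ _
    simp only [hH, Set.mem_preimage, Metric.mem_ball] at hmem
    have htri : dist (f (k₀:X)) 1 ≥ 1 - (8:ℝ)⁻¹ := by
      have h2 := dist_triangle (1:ℂ) (f (k₀:X)) (0:ℂ)
      have h01 : dist (1:ℂ) (0:ℂ) = 1 := by simp
      rw [dist_comm (1:ℂ) (f (k₀:X))] at h2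
      have h3 : dist (f (k₀:X)) (0:ℂ) < (8:ℝ)⁻¹ := h
      linarith [h2, h01 ▸ h2]
    linarith [hrIoo.2]
  refine ⟨H, hHclopen, hHne, hHprop, (2*Real.pi*Complex.I)⁻¹ • e, A.smul_mem heA _, ?_⟩
  intro x
  have h2πI : (2*Real.pi*Complex.I : ℂ) ≠ 0 := by
    simp [Real.pi_ne_zero, Complex.I_ne_zero]
  by_cases hx : x ∈ H
  · rw [if_pos hx]
    have hball : f x ∈ Metric.ball (1:ℂ) r := hx
    have := circleIntegral.integral_sub_inv_of_mem_ball hball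
    rw [ContinuousMap.smul_apply, heval x, this, smul_eq_mul]
    field_simp
  · rw [if_neg hx]
    have houts : r < dist (f x) 1 := by
      rcases lt_trichotomy (dist (f x) 1) r with h | h | h
      · exact absurd (Metric.mem_ball.mpr h) hx
      · exact absurd h (hsphere x)
      · exact h
    have hzero : (∮ z in C(1, r), (z - f x)⁻¹) = 0 := by
      have hne : ∀ z ∈ Metric.closedBall (1:ℂ) r, z - f x ≠ 0 := by
        intro z hz h0
        rw [sub_eq_zero] at h0
        rw [Metric.mem_closedBall] at hz
        rw [← h0] at houts
        linarith
      apply Complex.circleIntegral_eq_zero_of_differentiable_on_off_countable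
        (le_of_lt hrpos) Set.countable_empty
      · exact ((continuous_id.sub continuous_const).continuousOn).inv₀ hne
      · intro z hz
        exact (differentiableAt_id.sub_const _).inv (hne z (Metric.ball_subset_closedBall hz.1))
    rw [ContinuousMap.smul_apply, heval x, hzero, smul_eq_mul, mul_zero]

end Main
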